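/- Let G be a finite simple graph with vertex set {1,…,n} and edge set E, and let k ≥ 1 and m be natural numbers. The following system of polynomials in the variables y_{ij} ({i,j} ∈ E) and x₁,…,xₙ has a common zero over ℂ if and only if G has a k-colorable subgraph with m edges, i.e., there is a set E' ⊆ E with |E'| = m such that the graph (V(G), E') admits a proper k-coloring: (∑_{{i,j}∈E} y_{ij}) − m = 0; y_{ij}² − y_{ij} = 0 for every {i,j} ∈ E; x_i^k − 1 = 0 for every i ∈ {1,…,n}; and y_{ij}·(x_i^{k−1} + x_i^{k−2}x_j + ⋯ + x_i x_j^{k−2} + x_j^{k−1}) = 0 for every {i,j} ∈ E. -/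
import Mathlib


open MvPolynomial Finset

private lemma geom_aux {x y : ℂ} {k : ℕ} (hk : 1 ≤ k) (hxy : x ≠ y) (hx : x ^ k = 1)
    (hy : y ^ k = 1) : (∑ t ∈ Finset.range k, x ^ (k - 1 - t) * y ^ t) = 0 := by
  have h := geom_sum₂_mul y x k
  have hs : (∑ t ∈ Finset.range k, x ^ (k - 1 - t) * y ^ t)
      = ∑ t ∈ Finset.range k, y ^ t * x ^ (k - 1 - t) := by
    exact Finset.sum_congr rfl fun t _ => mul_comm _ _
  rw [hs]
  have : (∑ t ∈ Finset.range k, y ^ t * x ^ (k - 1 - t)) * (y - x) = 0 := by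
    rw [h, hx, hy, sub_self]
  rcases mul_eq_zero.mp this with h0 | h0
  · exact h0
  · exact absurd (sub_eq_zero.mp h0) (Ne.symm hxy)

private lemma geom_aux_eq {x : ℂ} {k : ℕ} (hk : 1 ≤ k) (hx : x ^ k = 1) :
    (∑ t ∈ Finset.range k, x ^ (k - 1 - t) * x ^ t) = (k : ℂ) * x ^ (k - 1) := by
  have : ∀ t ∈ Finset.range k, x ^ (k - 1 - t) * x ^ t = x ^ (k - 1) := by
    intro t ht
    rw [← pow_add, Nat.sub_add_cancel (Nat.le_sub_one_of_lt (Finset.mem_range.mp ht))]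
  rw [Finset.sum_congr rfl this, Finset.sum_const, Finset.card_range, nsmul_eq_mul]

/-- The system `(∑_{{i,j}∈E} y_{ij}) − m`,
`y_{ij}² − y_{ij}`, `x_i^k − 1`, `y_{ij}·(x_i^{k−1} + x_i^{k−2}x_j + ⋯ + x_j^{k−1})`
has a common zero over `ℂ` iff `G` has a `k`-colorable subgraph with `m`
edges. -/
theorem stmt10 (n : ℕ) (G : SimpleGraph (Fin n)) [DecidableRel G.Adj]
    (k m : ℕ) (hk : 1 ≤ k) :
    (∃ (zy : Sym2 (Fin n) → ℂ) (zx : Fin n → ℂ),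
      (∑ e ∈ G.edgeFinset, zy e) - (m : ℂ) = 0 ∧
      (∀ e ∈ G.edgeFinset, zy e ^ 2 - zy e = 0) ∧
      (∀ i : Fin n, zx i ^ k - 1 = 0) ∧
      (∀ i j : Fin n, G.Adj i j →
        zy s(i, j) * (∑ t ∈ Finset.range k, zx i ^ (k - 1 - t) * zx j ^ t) = 0))
    ↔
    (∃ E' ⊆ G.edgeFinset, E'.card = m ∧
      (SimpleGraph.fromEdgeSet (↑E' : Set (Sym2 (Fin n)))).Colorable k) := by
  classical
  have hk0 : k ≠ 0 := by omega
  haveI : NeZero k := ⟨hk0⟩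
  set ζ : ℂ := Complex.exp (2 * Real.pi * Complex.I / k) with hζdef
  have hζ : IsPrimitiveRoot ζ k := Complex.isPrimitiveRoot_exp k hk0
  constructor
  · rintro ⟨zy, zx, hsum, hy, hx, hedge⟩
    have hx1 : ∀ i, zx i ^ k = 1 := fun i => by
      have := hx i; linear_combination this
    have hxne : ∀ i, zx i ≠ 0 := by
      intro i h0
      have := hx1 i
      rw [h0, zero_pow hk0] at this
      exact zero_ne_one this
    have hy01 : ∀ e ∈ G.edgeFinset, zy e = 0 ∨ zy e = 1 := by
      intro e he
      have h := hy e he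
      have : zy e * (zy e - 1) = 0 := by linear_combination h
      rcases mul_eq_zero.mp this with h0 | h0
      · exact Or.inl h0
      · exact Or.inr (sub_eq_zero.mp h0)
    set E' : Finset (Sym2 (Fin n)) := G.edgeFinset.filter (fun e => zy e = 1) with hE'
    refine ⟨E', Finset.filter_subset _ _, ?_, ?_⟩
    · -- cardinality
      have hsum' : (∑ e ∈ G.edgeFinset, zy e) = (E'.card : ℂ) := by
        rw [← Finset.sum_filter_add_sum_filter_not G.edgeFinset (fun e => zy e = 1)]
        have h1 : ∑ e ∈ G.edgeFinset.filter (fun e => zy e = 1), zy e = (E'.card : ℂ) := by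
          rw [Finset.sum_congr rfl (fun e he => (Finset.mem_filter.mp he).2),
            Finset.sum_const, nsmul_eq_mul, mul_one, hE']
        have h2 : ∑ e ∈ G.edgeFinset.filter (fun e => ¬ zy e = 1), zy e = 0 := by
          apply Finset.sum_eq_zero
          intro e he
          rcases Finset.mem_filter.mp he with ⟨he1, he2⟩
          rcases hy01 e he1 with h0 | h0
          · exact h0
          · exact absurd h0 he2
        rw [h1, h2, add_zero]
      have h := sub_eq_zero.mp hsum
      rw [hsum'] at h
      exact_mod_cast h
    · -- colorability
      have hex : ∀ i : Fin n, ∃ a < k, ζ ^ a = zx i := fun i =>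
        hζ.eq_pow_of_pow_eq_one (hx1 i)
      choose c hck hcz using hex
      refine ⟨SimpleGraph.Coloring.mk (fun i => (⟨c i, hck i⟩ : Fin k)) ?_⟩
      intro i j hadj hcij
      rw [SimpleGraph.fromEdgeSet_adj] at hadj
      obtain ⟨hmem, hne⟩ := hadj
      rw [Finset.mem_coe, hE', Finset.mem_filter] at hmem
      obtain ⟨hmemE, hzy1⟩ := hmem
      have hGadj : G.Adj i j := by
        rwa [SimpleGraph.mem_edgeFinset, SimpleGraph.mem_edgeSet] at hmemE
      have heq : zx i = zx j := by
        have : c i = c j := by simpa using congrArg Fin.val hcij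
        rw [← hcz i, ← hcz j, this]
      have h4 := hedge i j hGadj
      rw [hzy1, one_mul] at h4
      rw [show (∑ t ∈ Finset.range k, zx i ^ (k - 1 - t) * zx j ^ t)
          = ∑ t ∈ Finset.range k, zx i ^ (k - 1 - t) * zx i ^ t by
        exact Finset.sum_congr rfl fun t _ => by rw [heq]] at h4
      rw [geom_aux_eq hk (hx1 i)] at h4
      rcases mul_eq_zero.mp h4 with h0 | h0
      · exact hk0 (by exact_mod_cast h0)
      · exact pow_ne_zero (k-1) (hxne i) h0
  · rintro ⟨E', hsub, hcard, ⟨C⟩⟩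
    refine ⟨fun e => if e ∈ E' then 1 else 0, fun i => ζ ^ (C i : ℕ), ?_, ?_, ?_, ?_⟩
    · rw [Finset.sum_ite_mem, Finset.inter_eq_right.mpr hsub, Finset.sum_const,
        nsmul_eq_mul, mul_one, hcard, sub_self]
    · intro e _; dsimp only; split <;> ring
    · intro i
      rw [← pow_mul, mul_comm, pow_mul, hζ.pow_eq_one, one_pow, sub_self]
    · intro i j hadj
      dsimp only
      by_cases hmem : s(i, j) ∈ E'
      · rw [if_pos hmem, one_mul]
        have hadj' : (SimpleGraph.fromEdgeSet (↑E' : Set (Sym2 (Fin n)))).Adj i j := by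
          rw [SimpleGraph.fromEdgeSet_adj]
          exact ⟨Finset.mem_coe.mpr hmem, hadj.ne⟩
        have hCne : C i ≠ C j := C.valid hadj'
        have hne : ζ ^ (C i : ℕ) ≠ ζ ^ (C j : ℕ) := by
          intro h
          exact hCne (Fin.ext (hζ.pow_inj (C i).isLt (C j).isLt h))
        exact geom_aux hk hne (by rw [← pow_mul, mul_comm, pow_mul, hζ.pow_eq_one, one_pow])
          (by rw [← pow_mul, mul_comm, pow_mul, hζ.pow_eq_one, one_pow])
      · rw [if_neg hmem, zero_mul]
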